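/- arXiv:2303.00570 — 2 statements merged into one kernel-verified Lean document; each statement's English description precedes it below -/
import Mathlib

section
/- Let d ≥ 1 be an integer and 0 < β ≤ d. Let V : ℝ^d → (0,∞) be twice continuously differentiable, α-strongly convex (∇²V(x) ⪰ α I_d for all x, α > 0), and satisfy |∇V(x)|² ≤ α C_V V(x) for all x ∈ ℝ^d, where C_V ∈ (0, (d+2)/(d+2−β)). Then there exist γ ∈ (0, β/(d+2)] and a constant c > 0 such that V(x)^{1−γ} ∇²(V^γ)(x) ⪰ c·I_d for all x ∈ ℝ^d; in particular ∇²(V^γ)(x) is invertible for every x and sup_{x∈ℝ^d} ‖V(x)^{γ−1}(∇²(V^γ))^{-1}(x)‖₂ ≤ c^{-1}. -/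
open MeasureTheory Real Matrix

/-- The Hessian matrix of `f : ℝ^d → ℝ` at `x`. -/
noncomputable def hessianMatrix {d : ℕ} (f : EuclideanSpace ℝ (Fin d) → ℝ)
    (x : EuclideanSpace ℝ (Fin d)) : Matrix (Fin d) (Fin d) ℝ :=
  Matrix.of fun i j =>
    iteratedFDeriv ℝ 2 f x ![EuclideanSpace.single i 1, EuclideanSpace.single j 1]

lemma hessianMatrix_eq_fderiv {d : ℕ} (f : EuclideanSpace ℝ (Fin d) → ℝ)
    (x : EuclideanSpace ℝ (Fin d)) (i j : Fin d) :
    hessianMatrix f x i j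
      = fderiv ℝ (fderiv ℝ f) x (EuclideanSpace.single i 1) (EuclideanSpace.single j 1) := by
  simp [hessianMatrix, iteratedFDeriv_two_apply]

lemma hess_rpow {d : ℕ} (V : EuclideanSpace ℝ (Fin d) → ℝ) (hV : ContDiff ℝ 2 V)
    (hVpos : ∀ x, 0 < V x) (γ : ℝ) (x : EuclideanSpace ℝ (Fin d)) :
    hessianMatrix (fun y => V y ^ γ) x
      = (γ * V x ^ (γ - 1)) • hessianMatrix V x
        + (γ * (γ - 1) * V x ^ (γ - 2)) •
            Matrix.vecMulVec (fun i => fderiv ℝ V x (EuclideanSpace.single i 1))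
              (fun j => fderiv ℝ V x (EuclideanSpace.single j 1)) := by
  have hVd : Differentiable ℝ V := hV.differentiable (by norm_num)
  have hW' : ∀ y, HasFDerivAt (fun z => V z ^ γ) ((γ * V y ^ (γ - 1)) • fderiv ℝ V y) y :=
    fun y => (hVd y).hasFDerivAt.rpow_const (Or.inl (hVpos y).ne')
  have hFd : (fderiv ℝ fun z => V z ^ γ) = fun y => (γ * V y ^ (γ - 1)) • fderiv ℝ V y :=
    funext fun y => (hW' y).fderiv
  have hs : HasFDerivAt (fun z => γ * V z ^ (γ - 1))
      ((γ * ((γ - 1) * V x ^ (γ - 2))) • fderiv ℝ V x) x := by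
    have h1 : HasFDerivAt (fun z => V z ^ (γ - 1))
        (((γ - 1) * V x ^ (γ - 1 - 1)) • fderiv ℝ V x) x :=
      (hVd x).hasFDerivAt.rpow_const (Or.inl (hVpos x).ne')
    have h2 := h1.const_mul γ
    rw [show γ - 1 - 1 = γ - 2 by ring] at h2
    simpa [smul_smul] using h2
  have hB : HasFDerivAt (fderiv ℝ V) (fderiv ℝ (fderiv ℝ V) x) x := by
    have hC1 : ContDiff ℝ 1 (fderiv ℝ V) := hV.fderiv_right (by norm_num)
    exact (hC1.differentiable one_ne_zero x).hasFDerivAt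
  have hF : HasFDerivAt (fun y => (γ * V y ^ (γ - 1)) • fderiv ℝ V y)
      ((γ * V x ^ (γ - 1)) • fderiv ℝ (fderiv ℝ V) x
        + ((γ * ((γ - 1) * V x ^ (γ - 2))) • fderiv ℝ V x).smulRight (fderiv ℝ V x)) x :=
    hs.smul hB
  have key : fderiv ℝ (fderiv ℝ fun z => V z ^ γ) x
      = (γ * V x ^ (γ - 1)) • fderiv ℝ (fderiv ℝ V) x
        + ((γ * ((γ - 1) * V x ^ (γ - 2))) • fderiv ℝ V x).smulRight (fderiv ℝ V x) := by
    rw [hFd]; exact hF.fderiv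
  ext i j
  rw [hessianMatrix_eq_fderiv, key]
  simp [hessianMatrix_eq_fderiv, Matrix.vecMulVec_apply, ContinuousLinearMap.smulRight_apply,
    ContinuousLinearMap.add_apply, ContinuousLinearMap.smul_apply, smul_eq_mul]
  ring

lemma vecMulVec_quad {d : ℕ} (g v : Fin d → ℝ) :
    v ⬝ᵥ (Matrix.vecMulVec g g *ᵥ v) = (∑ i, g i * v i) ^ 2 := by
  have h : ∀ i, (Matrix.vecMulVec g g *ᵥ v) i = ∑ j, g i * g j * v j := fun i => by
    simp [Matrix.mulVec, Matrix.vecMulVec_apply, dotProduct]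
  calc v ⬝ᵥ (Matrix.vecMulVec g g *ᵥ v) = ∑ i, v i * ∑ j, g i * g j * v j := by
        simp [dotProduct, h]
    _ = ∑ i, ∑ j, (g i * v i) * (g j * v j) := by
        refine Finset.sum_congr rfl fun i _ => ?_
        rw [Finset.mul_sum]
        exact Finset.sum_congr rfl fun j _ => by ring
    _ = (∑ i, g i * v i) * (∑ j, g j * v j) := (Finset.sum_mul_sum _ _ _ _).symm
    _ = (∑ i, g i * v i) ^ 2 := (sq _).symm

lemma isHermitian_of_sub_smul_one {d : ℕ} (H : Matrix (Fin d) (Fin d) ℝ) (α : ℝ)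
    (h : (H - α • 1).PosSemidef) : H.IsHermitian := by
  have h2 := h.1.eq
  rw [Matrix.conjTranspose_sub, Matrix.conjTranspose_smul, Matrix.conjTranspose_one] at h2
  simp only [star_trivial] at h2
  exact sub_left_inj.mp h2

set_option maxHeartbeats 1000000 in
/-- If `0 < β ≤ d`, `V` is `α`-strongly convex and `|∇V|² ≤ α C_V V` with
`C_V ∈ (0, (d+2)/(d+2−β))`, then there are `γ ∈ (0, β/(d+2)]` and `c > 0` with
`V^{1−γ} ∇²(V^γ) ⪰ c I`; in particular `∇²(V^γ)` is invertible and
`‖V^{γ−1} (∇²(V^γ))⁻¹‖₂ ≤ c⁻¹` everywhere. -/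
theorem assumption_strongly_convex_implies_small_beta
    (d : ℕ) (hd : 1 ≤ d) (β : ℝ) (hβ0 : 0 < β) (hβd : β ≤ d)
    (V : EuclideanSpace ℝ (Fin d) → ℝ)
    (hV : ContDiff ℝ 2 V) (hVpos : ∀ x, 0 < V x)
    (α : ℝ) (hα : 0 < α)
    (hstrong : ∀ x, (hessianMatrix V x - α • 1).PosSemidef)
    (CV : ℝ) (hCV0 : 0 < CV) (hCVub : CV < ((d : ℝ) + 2) / ((d : ℝ) + 2 - β))
    (hCV : ∀ x, ‖gradient V x‖ ^ 2 ≤ α * CV * V x) :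
    ∃ γ : ℝ, 0 < γ ∧ γ ≤ β / (d + 2) ∧
      ∃ c : ℝ, 0 < c ∧ ∀ x,
        (V x ^ (1 - γ) • hessianMatrix (fun y => V y ^ γ) x - c • 1).PosSemidef ∧
        IsUnit (hessianMatrix (fun y => V y ^ γ) x) ∧
        ∀ v : EuclideanSpace ℝ (Fin d),
          ‖Matrix.toEuclideanLin
              (V x ^ (γ - 1) • (hessianMatrix (fun y => V y ^ γ) x)⁻¹) v‖ ≤ c⁻¹ * ‖v‖ := by
  have hd2 : (0:ℝ) < (d:ℝ) + 2 := by positivity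
  have hd2β : (0:ℝ) < (d:ℝ) + 2 - β := by
    have : β ≤ (d:ℝ) := hβd
    linarith
  set γ : ℝ := β / ((d:ℝ) + 2) with hγdef
  have hγ0 : 0 < γ := div_pos hβ0 hd2
  have hγ1 : γ < 1 := by
    rw [hγdef, div_lt_one hd2]; linarith
  have h1γ : 1 - γ = ((d:ℝ) + 2 - β) / ((d:ℝ) + 2) := by
    rw [hγdef]; field_simp
  have hkey : (1 - γ) * CV < 1 := by
    rw [h1γ, div_mul_eq_mul_div, div_lt_one hd2]
    have := (lt_div_iff₀ hd2β).mp hCVub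
    linarith
  set c : ℝ := γ * α * (1 - (1 - γ) * CV) with hcdef
  have hc : 0 < c := by
    apply mul_pos (mul_pos hγ0 hα); linarith
  refine ⟨γ, hγ0, le_rfl, c, hc, fun x => ?_⟩
  set k : ℝ := V x with hkdef
  have hk : 0 < k := hVpos x
  set g : Fin d → ℝ := fun i => fderiv ℝ V x (EuclideanSpace.single i 1) with hgdef
  set H : Matrix (Fin d) (Fin d) ℝ := hessianMatrix V x with hHdef
  set G : Matrix (Fin d) (Fin d) ℝ := Matrix.vecMulVec g g with hGdef
  set W : Matrix (Fin d) (Fin d) ℝ := hessianMatrix (fun y => V y ^ γ) x with hWdef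
  set A : Matrix (Fin d) (Fin d) ℝ := γ • H + (γ * (γ - 1) / k) • G with hAdef
  -- the rescaled Hessian
  have hWform : W = (γ * k ^ (γ - 1)) • H + (γ * (γ - 1) * k ^ (γ - 2)) • G :=
    hess_rpow V hV hVpos γ x
  have hcancel1 : k ^ (1 - γ) * k ^ (γ - 1) = 1 := by
    rw [← Real.rpow_add hk]; norm_num
  have hcancel2 : k ^ (1 - γ) * k ^ (γ - 2) = k⁻¹ := by
    rw [← Real.rpow_add hk, show (1 - γ) + (γ - 2) = -1 by ring, Real.rpow_neg_one]
  have hA_eq : k ^ (1 - γ) • W = A := by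
    rw [hWform, smul_add, smul_smul, smul_smul, hAdef]
    congr 1
    · congr 1
      rw [show k ^ (1-γ) * (γ * k ^ (γ-1)) = γ * (k ^ (1-γ) * k ^ (γ-1)) by ring, hcancel1]
      ring
    · congr 1
      rw [show k ^ (1-γ) * (γ * (γ-1) * k ^ (γ-2)) = γ * (γ-1) * (k ^ (1-γ) * k ^ (γ-2)) by ring,
        hcancel2]
      field_simp
  -- gradient bound
  have hg2 : ∑ i, g i ^ 2 ≤ α * CV * k := by
    have hgi : ∀ i, g i = gradient V x i := by
      intro i
      have h : inner ℝ (gradient V x) (EuclideanSpace.single i (1:ℝ))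
          = fderiv ℝ V x (EuclideanSpace.single i 1) := InnerProductSpace.toDual_symm_apply
      rw [hgdef]
      simp only []
      rw [← h, EuclideanSpace.inner_single_right]
      simp
    have hnorm : ‖gradient V x‖ ^ 2 = ∑ i, gradient V x i ^ 2 := by
      rw [← real_inner_self_eq_norm_sq]
      simp only [PiLp.inner_apply, RCLike.inner_apply, conj_trivial, sq]
    calc ∑ i, g i ^ 2 = ∑ i, gradient V x i ^ 2 := by simp [hgi]
      _ = ‖gradient V x‖ ^ 2 := hnorm.symm
      _ ≤ α * CV * k := hCV x
  -- quadratic form bound for A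
  have hquad : ∀ v : Fin d → ℝ, c * (v ⬝ᵥ v) ≤ v ⬝ᵥ (A *ᵥ v) := by
    intro v
    have hvv : 0 ≤ v ⬝ᵥ v := Finset.sum_nonneg fun i _ => mul_self_nonneg _
    have hHq : α * (v ⬝ᵥ v) ≤ v ⬝ᵥ (H *ᵥ v) := by
      have := (hstrong x).dotProduct_mulVec_nonneg v
      simp [Matrix.sub_mulVec, Matrix.smul_mulVec, Matrix.one_mulVec,
        dotProduct_sub, dotProduct_smul, smul_eq_mul] at this
      linarith
    have hGq : v ⬝ᵥ (G *ᵥ v) = (∑ i, g i * v i) ^ 2 := vecMulVec_quad g v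
    have hCS : (∑ i, g i * v i) ^ 2 ≤ (∑ i, g i ^ 2) * (∑ i, v i ^ 2) :=
      Finset.sum_mul_sq_le_sq_mul_sq _ _ _
    have hvv' : ∑ i, v i ^ 2 = v ⬝ᵥ v := by simp [dotProduct, sq]
    have hGq2 : v ⬝ᵥ (G *ᵥ v) ≤ α * CV * k * (v ⬝ᵥ v) := by
      rw [hGq]
      calc (∑ i, g i * v i) ^ 2 ≤ (∑ i, g i ^ 2) * (∑ i, v i ^ 2) := hCS
        _ ≤ (α * CV * k) * (v ⬝ᵥ v) := by
            rw [hvv']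
            exact mul_le_mul_of_nonneg_right hg2 hvv
    have hGq0 : 0 ≤ v ⬝ᵥ (G *ᵥ v) := by rw [hGq]; positivity
    have hAq : v ⬝ᵥ (A *ᵥ v) = γ * (v ⬝ᵥ (H *ᵥ v)) + (γ * (γ - 1) / k) * (v ⬝ᵥ (G *ᵥ v)) := by
      rw [hAdef]
      simp [Matrix.add_mulVec, Matrix.smul_mulVec, dotProduct_add,
        dotProduct_smul, smul_eq_mul]
    have hcoef : γ * (γ - 1) / k ≤ 0 := by
      apply div_nonpos_of_nonpos_of_nonneg _ hk.le
      nlinarith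
    have h2 : (γ * (γ - 1) / k) * (α * CV * k * (v ⬝ᵥ v)) ≤ (γ * (γ - 1) / k) * (v ⬝ᵥ (G *ᵥ v)) :=
      mul_le_mul_of_nonpos_left hGq2 hcoef
    have h3 : (γ * (γ - 1) / k) * (α * CV * k * (v ⬝ᵥ v)) = γ * (γ - 1) * α * CV * (v ⬝ᵥ v) := by
      field_simp
    have h4 : γ * α * (v ⬝ᵥ v) ≤ γ * (v ⬝ᵥ (H *ᵥ v)) := by
      have := mul_le_mul_of_nonneg_left hHq hγ0.le
      calc γ * α * (v ⬝ᵥ v) = γ * (α * (v ⬝ᵥ v)) := by ring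
        _ ≤ γ * (v ⬝ᵥ (H *ᵥ v)) := this
    rw [hAq]
    have hceq : c = γ * α + γ * (γ - 1) * α * CV := by rw [hcdef]; ring
    have h2' : γ * (γ - 1) * α * CV * (v ⬝ᵥ v) ≤ (γ * (γ - 1) / k) * (v ⬝ᵥ (G *ᵥ v)) :=
      h3 ▸ h2
    calc c * (v ⬝ᵥ v) = γ * α * (v ⬝ᵥ v) + γ * (γ - 1) * α * CV * (v ⬝ᵥ v) := by
          rw [hceq]; ring
      _ ≤ γ * (v ⬝ᵥ (H *ᵥ v)) + (γ * (γ - 1) / k) * (v ⬝ᵥ (G *ᵥ v)) := add_le_add h4 h2'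
  -- Hermitian facts
  have hHsym : H.IsHermitian := isHermitian_of_sub_smul_one H α (hstrong x)
  have hGsym : G.IsHermitian := by
    rw [hGdef]
    unfold Matrix.IsHermitian
    ext i j
    simp [Matrix.conjTranspose_apply, Matrix.vecMulVec_apply, mul_comm]
  have hAsym : A.IsHermitian := by
    unfold Matrix.IsHermitian
    rw [hAdef, Matrix.conjTranspose_add, Matrix.conjTranspose_smul, Matrix.conjTranspose_smul]
    simp only [star_trivial]
    rw [hHsym.eq, hGsym.eq]
  -- first conclusion
  have hPSD : (k ^ (1 - γ) • W - c • 1).PosSemidef := by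
    rw [hA_eq]
    apply Matrix.PosSemidef.of_dotProduct_mulVec_nonneg
    · unfold Matrix.IsHermitian
      rw [Matrix.conjTranspose_sub, Matrix.conjTranspose_smul, Matrix.conjTranspose_one]
      simp only [star_trivial]
      rw [hAsym.eq]
    · intro v
      have h := hquad v
      simp only [star_trivial, Matrix.sub_mulVec, Matrix.smul_mulVec, Matrix.one_mulVec,
        dotProduct_sub, dotProduct_smul, smul_eq_mul]
      linarith
  -- A is positive definite
  have hApos : A.PosDef := by
    refine Matrix.PosDef.of_dotProduct_mulVec_pos hAsym fun v hv => ?_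
    have hvv : 0 < v ⬝ᵥ v := by
      obtain ⟨i, hi⟩ := Function.ne_iff.mp hv
      refine Finset.sum_pos' (fun j _ => mul_self_nonneg _) ⟨i, Finset.mem_univ i, ?_⟩
      exact mul_self_pos.mpr hi
    have := hquad v
    simp only [star_trivial]
    calc (0:ℝ) < c * (v ⬝ᵥ v) := mul_pos hc hvv
      _ ≤ v ⬝ᵥ (A *ᵥ v) := this
  -- W is positive definite, hence a unit
  have hWA : W = k ^ (γ - 1) • A := by
    rw [← hA_eq, smul_smul, mul_comm (k ^ (γ-1)), hcancel1, one_smul]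
  have hWpos : W.PosDef := by
    rw [hWA]
    have hkpos : 0 < k ^ (γ - 1) := Real.rpow_pos_of_pos hk _
    refine Matrix.PosDef.of_dotProduct_mulVec_pos ?_ fun v hv => ?_
    · unfold Matrix.IsHermitian
      rw [Matrix.conjTranspose_smul]
      simp only [star_trivial]
      rw [hAsym.eq]
    · simp only [star_trivial, Matrix.smul_mulVec, dotProduct_smul, smul_eq_mul]
      exact mul_pos hkpos (hApos.dotProduct_mulVec_pos hv)
  have hWunit : IsUnit W := hWpos.isUnit
  refine ⟨hPSD, hWunit, fun v => ?_⟩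
  -- inverse identity
  have hWinv : W * W⁻¹ = 1 := Matrix.mul_nonsing_inv _ ((Matrix.isUnit_iff_isUnit_det _).mp hWunit)
  have hright : A * (k ^ (γ - 1) • W⁻¹) = 1 := by
    rw [← hA_eq, Matrix.mul_smul, Matrix.smul_mul, hWinv, smul_smul,
      mul_comm (k ^ (γ - 1)), hcancel1, one_smul]
  have hMeq : k ^ (γ - 1) • W⁻¹ = A⁻¹ := (Matrix.inv_eq_right_inv hright).symm
  rw [hMeq]
  -- norm bound
  set v' : Fin d → ℝ := fun i => v i with hv'def
  set w : Fin d → ℝ := A⁻¹ *ᵥ v' with hwdef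
  have hAw : A *ᵥ w = v' := by
    rw [hwdef, ← hMeq, Matrix.mulVec_mulVec, hright, Matrix.one_mulVec]
  have hww : 0 ≤ w ⬝ᵥ w := Finset.sum_nonneg fun i _ => mul_self_nonneg _
  have hvv : 0 ≤ v' ⬝ᵥ v' := Finset.sum_nonneg fun i _ => mul_self_nonneg _
  have hquadw := hquad w
  rw [hAw] at hquadw
  -- Cauchy-Schwarz
  have hCS : w ⬝ᵥ v' ≤ Real.sqrt (w ⬝ᵥ w) * Real.sqrt (v' ⬝ᵥ v') := by
    have h1 : (∑ i, w i * v' i) ^ 2 ≤ (∑ i, w i ^ 2) * (∑ i, v' i ^ 2) :=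
      Finset.sum_mul_sq_le_sq_mul_sq _ _ _
    have hw2 : ∑ i, w i ^ 2 = w ⬝ᵥ w := by simp [dotProduct, sq]
    have hv2 : ∑ i, v' i ^ 2 = v' ⬝ᵥ v' := by simp [dotProduct, sq]
    rw [hw2, hv2] at h1
    calc w ⬝ᵥ v' ≤ |w ⬝ᵥ v'| := le_abs_self _
      _ = Real.sqrt ((w ⬝ᵥ v') ^ 2) := (Real.sqrt_sq_eq_abs _).symm
      _ ≤ Real.sqrt ((w ⬝ᵥ w) * (v' ⬝ᵥ v')) := Real.sqrt_le_sqrt h1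
      _ = Real.sqrt (w ⬝ᵥ w) * Real.sqrt (v' ⬝ᵥ v') := Real.sqrt_mul hww _
  have hnorm1 : ‖Matrix.toEuclideanLin A⁻¹ v‖ = Real.sqrt (w ⬝ᵥ w) := by
    rw [EuclideanSpace.norm_eq]
    congr 1
    rw [show w ⬝ᵥ w = ∑ i, w i * w i from rfl]
    refine Finset.sum_congr rfl fun i _ => ?_
    have hco : (Matrix.toEuclideanLin A⁻¹ v) i = w i := rfl
    rw [hco, Real.norm_eq_abs, sq_abs, sq]
  have hnorm2 : ‖v‖ = Real.sqrt (v' ⬝ᵥ v') := by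
    rw [EuclideanSpace.norm_eq]
    congr 1
    rw [show v' ⬝ᵥ v' = ∑ i, v' i * v' i from rfl]
    refine Finset.sum_congr rfl fun i _ => ?_
    rw [Real.norm_eq_abs, sq_abs, sq]
  rw [hnorm1, hnorm2]
  set a := Real.sqrt (w ⬝ᵥ w) with hadef
  set b := Real.sqrt (v' ⬝ᵥ v') with hbdef
  have ha2 : a ^ 2 = w ⬝ᵥ w := Real.sq_sqrt hww
  have ha0 : 0 ≤ a := Real.sqrt_nonneg _
  have hb0 : 0 ≤ b := Real.sqrt_nonneg _
  have hkey2 : c * a ^ 2 ≤ a * b := by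
    rw [ha2]
    exact le_trans hquadw hCS
  rcases eq_or_lt_of_le ha0 with h0 | h0
  · rw [← h0]; positivity
  · have hcab : c * a ≤ b := by
      have h' : a * (c * a) ≤ a * b := by
        rw [show a * (c * a) = c * a ^ 2 by ring]; exact hkey2
      exact le_of_mul_le_mul_left h' h0
    rw [inv_mul_eq_div, le_div_iff₀ hc]
    linarith
end

section
/- Let d ≥ 1 be an integer, β > d/2 + 1, and let V ∈ C²(ℝ^d) be positive, α-strongly convex (∇²V ⪰ α I_d, α > 0) and L-gradient Lipschitz (∇²V ⪯ L I_d). Then ∫_{ℝ^d} |∇V(x)|² V(x)^{-β} dx = (β−1)^{-1} ∫_{ℝ^d} ΔV(x) · V(x)^{-(β−1)} dx, and consequently ∫_{ℝ^d} |∇V(x)|² π_β(x) dx ≤ (dL/(β−1)) · ∫_{ℝ^d} V(x) π_β(x) dx. -/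
open MeasureTheory Real Matrix

open MeasureTheory Real Matrix Filter Topology Set InnerProductSpace

lemma div1d {H H' : ℝ → ℝ} (hd : ∀ t, HasDerivAt H (H' t) t)
    (hi : Integrable H') (h0 : Tendsto H (cocompact ℝ) (𝓝 0)) :
    ∫ t, H' t = 0 := by
  rw [cocompact_eq_atBot_atTop] at h0
  simpa using integral_of_hasDerivAt_of_tendsto hd hi
    (h0.mono_left le_sup_left) (h0.mono_left le_sup_right)

lemma tendsto_prodmk_cocompact {E' : Type*} [TopologicalSpace E'] (x : E') :
    Tendsto (fun t : ℝ ↦ (x, t)) (cocompact ℝ) (cocompact (E' × ℝ)) := by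
  intro s hs
  rcases mem_cocompact.1 hs with ⟨K, hK, hKs⟩
  apply mem_of_superset ((hK.image continuous_snd).compl_mem_cocompact)
  intro t ht
  apply hKs
  intro h
  exact ht ⟨(x, t), h, rfl⟩

lemma divProd {E : Type*} [NormedAddCommGroup E] [NormedSpace ℝ E] [MeasurableSpace E]
    {μ : Measure E} [SigmaFinite μ] {h h' : E × ℝ → ℝ}
    (hd : ∀ z, HasLineDerivAt ℝ h (h' z) z (0, 1))
    (hi : Integrable h' (μ.prod volume))
    (h0 : ∀ x, Tendsto (fun t ↦ h (x, t)) (cocompact ℝ) (𝓝 0)) :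
    ∫ z, h' z ∂(μ.prod volume) = 0 := by
  rw [integral_prod _ hi]
  have : ∀ᵐ x ∂μ, (∫ t, h' (x, t)) = 0 := by
    filter_upwards [hi.prod_right_ae] with x hx
    apply div1d ?_ hx (h0 x)
    intro t
    convert (hd (x, t)).scomp_of_eq t ((hasDerivAt_id t).add (hasDerivAt_const t (-t))) (by simp)
    · rfl
    · rfl
    · simp
    · simp
  rw [integral_congr_ae this]
  simp

lemma divHaarProd {E : Type*} [NormedAddCommGroup E] [NormedSpace ℝ E] [MeasurableSpace E]
    [BorelSpace E] [FiniteDimensional ℝ E] {μ : Measure (E × ℝ)} [Measure.IsAddHaarMeasure μ]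
    {h h' : E × ℝ → ℝ}
    (hd : ∀ z, HasLineDerivAt ℝ h (h' z) z (0, 1))
    (hi : Integrable h' μ)
    (h0 : ∀ x, Tendsto (fun t ↦ h (x, t)) (cocompact ℝ) (𝓝 0)) :
    ∫ z, h' z ∂μ = 0 := by
  let ν : Measure E := MeasureTheory.Measure.addHaar
  have A : ν.prod volume = (Measure.addHaarScalarFactor (ν.prod volume) μ) • μ :=
    Measure.isAddLeftInvariant_eq_smul _ _
  have Hi : Integrable h' (ν.prod volume) := by
    rw [A]; exact hi.smul_measure_nnreal
  have key := divProd hd Hi h0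
  rw [A, integral_smul_nnreal_measure] at key
  rcases smul_eq_zero.1 key with hc0 | hz
  · exact absurd hc0 (Measure.addHaarScalarFactor_pos_of_isAddHaarMeasure _ _).ne'
  · exact hz

lemma divDir {E : Type*} [NormedAddCommGroup E] [NormedSpace ℝ E] [MeasurableSpace E]
    [BorelSpace E] [FiniteDimensional ℝ E] {μ : Measure E} [Measure.IsAddHaarMeasure μ]
    {h h' : E → ℝ} {v : E} (hv : v ≠ 0)
    (hd : ∀ x, HasLineDerivAt ℝ h (h' x) x v)
    (hi : Integrable h' μ)
    (h0 : Tendsto h (cocompact E) (𝓝 0)) :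
    ∫ x, h' x ∂μ = 0 := by
  have : Nontrivial E := nontrivial_iff.2 ⟨v, 0, hv⟩
  let n := Module.finrank ℝ E
  let E' := Fin (n - 1) → ℝ
  obtain ⟨L, hL⟩ : ∃ L : E ≃L[ℝ] (E' × ℝ), L v = (0, 1) := by
    have : Module.finrank ℝ (E' × ℝ) = n := by
      simpa [E'] using Nat.sub_add_cancel Module.finrank_pos
    have L₀ : E ≃L[ℝ] (E' × ℝ) := (ContinuousLinearEquiv.ofFinrankEq this).symm
    obtain ⟨M, hM⟩ : ∃ M : (E' × ℝ) ≃L[ℝ] (E' × ℝ), M (L₀ v) = (0, 1) := by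
      apply SeparatingDual.exists_continuousLinearEquiv_apply_eq
      · simpa using hv
      · simp
    exact ⟨L₀.trans M, by simp [hM]⟩
  let ν := Measure.map L μ
  have L_emb : MeasurableEmbedding L := L.toHomeomorph.measurableEmbedding
  have key : ∫ z, (h' ∘ L.symm) z ∂ν = 0 := by
    apply divHaarProd (h := h ∘ L.symm)
    · intro z
      have : h = (h ∘ L.symm) ∘ (L : E →ₗ[ℝ] (E' × ℝ)) := by ext y; simp
      have hd' := hd (L.symm z)
      rw [this] at hd'
      convert hd'.of_comp using 1 <;> simp [← hL]
    · simpa [ν, L_emb.integrable_map_iff, Function.comp_def] using hi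
    · intro x
      exact h0.comp ((L.symm.toHomeomorph.isClosedEmbedding.tendsto_cocompact).comp
        (tendsto_prodmk_cocompact x))
  rw [← key, L_emb.integral_map]
  simp

variable {d : ℕ}

local notation "E" => EuclideanSpace ℝ (Fin d)

noncomputable def ee (i : Fin d) : EuclideanSpace ℝ (Fin d) := EuclideanSpace.single i 1

lemma sum_single_eq (u : E) : ∑ i, u i • ee i = u := by
  have := (EuclideanSpace.basisFun (Fin d) ℝ).sum_repr u
  simpa [ee, EuclideanSpace.basisFun_apply, EuclideanSpace.basisFun_repr] using this

lemma norm_sq_eq' (u : E) : ‖u‖ ^ 2 = ∑ i, u i ^ 2 := by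
  rw [EuclideanSpace.norm_eq, Real.sq_sqrt (by positivity)]
  simp [sq_abs]

lemma bilin_expand (A : EuclideanSpace ℝ (Fin d) →L[ℝ] EuclideanSpace ℝ (Fin d) →L[ℝ] ℝ) (u : E) :
    A u u = ∑ i, ∑ j, u i * u j * A (ee i) (ee j) := by
  have key : ∀ (T : E →L[ℝ] ℝ) (w : E), T w = ∑ j, w j * T (ee j) := by
    intro T w
    conv_lhs => rw [← sum_single_eq w]
    rw [map_sum]
    simp [smul_eq_mul]
  have key2 : ∀ w : E, A w u = ∑ i, w i * A (ee i) u := by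
    intro w
    conv_lhs => rw [← sum_single_eq w]
    rw [map_sum]
    simp [ContinuousLinearMap.sum_apply, smul_eq_mul]
  rw [key2 u]
  refine Finset.sum_congr rfl fun i _ => ?_
  rw [key (A (ee i)) u, Finset.mul_sum]
  exact Finset.sum_congr rfl fun j _ => by ring

lemma dot_expand (M : Matrix (Fin d) (Fin d) ℝ) (c : ℝ) (u : Fin d → ℝ) :
    u ⬝ᵥ (M - c • 1) *ᵥ u = (∑ i, ∑ j, u i * u j * M i j) - c * ∑ i, u i ^ 2 := by
  simp only [dotProduct, Matrix.mulVec, dotProduct, Matrix.sub_apply, Matrix.smul_apply,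
    Matrix.one_apply, smul_eq_mul, mul_ite, mul_one, mul_zero, sub_mul, ite_mul, zero_mul,
    mul_sub, Finset.sum_sub_distrib, Finset.sum_ite_eq, Finset.mem_univ, if_true, Finset.mul_sum]
  congr 1
  · exact Finset.sum_congr rfl fun i _ => Finset.sum_congr rfl fun j _ => by ring
  · exact Finset.sum_congr rfl fun i _ => by ring

lemma hessian_apply (V : EuclideanSpace ℝ (Fin d) → ℝ) (x : E) (i j : Fin d) :
    hessianMatrix V x i j = fderiv ℝ (fderiv ℝ V) x (ee i) (ee j) := by
  simp [hessianMatrix, ee, iteratedFDeriv_two_apply]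

lemma quad_lower {V : EuclideanSpace ℝ (Fin d) → ℝ} {α : ℝ} (x : E)
    (hstrong : (hessianMatrix V x - α • 1).PosSemidef) (u : E) :
    α * ‖u‖ ^ 2 ≤ fderiv ℝ (fderiv ℝ V) x u u := by
  have h := hstrong.dotProduct_mulVec_nonneg (fun i => u i)
  rw [star_trivial, dot_expand, sub_nonneg] at h
  rw [bilin_expand, norm_sq_eq']
  refine h.trans_eq (Finset.sum_congr rfl fun i _ => Finset.sum_congr rfl fun j _ => ?_)
  rw [hessian_apply]

lemma quad_upper {V : EuclideanSpace ℝ (Fin d) → ℝ} {L : ℝ} (x : E)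
    (hlip : ((L • 1 : Matrix (Fin d) (Fin d) ℝ) - hessianMatrix V x).PosSemidef) (u : E) :
    fderiv ℝ (fderiv ℝ V) x u u ≤ L * ‖u‖ ^ 2 := by
  have e2 : ((L • 1 : Matrix (Fin d) (Fin d) ℝ) - hessianMatrix V x)
      = ((-hessianMatrix V x) - (-L) • 1) := by rw [neg_smul]; abel
  have h := (e2 ▸ hlip).dotProduct_mulVec_nonneg (fun i => u i)
  rw [star_trivial, dot_expand, sub_nonneg] at h
  have h2 : ∑ i, ∑ j, u i * u j * hessianMatrix V x i j ≤ L * ∑ i, (u i) ^ 2 := by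
    have e3 : ∑ i, ∑ j, (fun i => u i) i * (fun i => u i) j * (-hessianMatrix V x) i j
        = -∑ i, ∑ j, u i * u j * hessianMatrix V x i j := by
      simp [Matrix.neg_apply, ← Finset.sum_neg_distrib]
    rw [e3] at h
    linarith
  rw [bilin_expand, norm_sq_eq']
  refine le_trans (le_of_eq ?_) h2
  exact Finset.sum_congr rfl fun i _ => Finset.sum_congr rfl fun j _ => by rw [hessian_apply]



lemma line_hasDerivAt (x u : E) (t : ℝ) :
    HasDerivAt (fun s : ℝ => x + s • u) u t := by
  simpa using ((hasDerivAt_id t).smul_const u).const_add x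

lemma phi_hasDerivAt {V : EuclideanSpace ℝ (Fin d) → ℝ} (hV : ContDiff ℝ 2 V) (x u : E) (t : ℝ) :
    HasDerivAt (fun s : ℝ => V (x + s • u)) (fderiv ℝ V (x + t • u) u) t :=
  (hV.differentiable two_ne_zero _).hasFDerivAt.comp_hasDerivAt t (line_hasDerivAt x u t)

lemma psi_hasDerivAt {V : EuclideanSpace ℝ (Fin d) → ℝ} (hV : ContDiff ℝ 2 V) (x u : E) (t : ℝ) :
    HasDerivAt (fun s : ℝ => fderiv ℝ V (x + s • u) u)
      (fderiv ℝ (fderiv ℝ V) (x + t • u) u u) t := by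
  have hWd : Differentiable ℝ (fderiv ℝ V) :=
    (hV.fderiv_right (le_refl 2)).differentiable one_ne_zero
  have h1 : HasFDerivAt (fun y => fderiv ℝ V y u)
      ((ContinuousLinearMap.apply ℝ ℝ u).comp (fderiv ℝ (fderiv ℝ V) (x + t • u)))
      (x + t • u) :=
    (ContinuousLinearMap.apply ℝ ℝ u).hasFDerivAt.comp _ (hWd _).hasFDerivAt
  simpa [Function.comp_def] using h1.comp_hasDerivAt t (line_hasDerivAt x u t)

lemma taylor_upper_general {V : EuclideanSpace ℝ (Fin d) → ℝ} (hV : ContDiff ℝ 2 V) (x u : E)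
    {C : ℝ} (hq : ∀ y, fderiv ℝ (fderiv ℝ V) y u u ≤ C) :
    V (x + u) ≤ V x + fderiv ℝ V x u + C / 2 := by
  set F : ℝ → ℝ := fun t => V (x + t • u) - (V x + t * fderiv ℝ V x u + t ^ 2 * (C / 2)) with hF
  set F' : ℝ → ℝ := fun t => fderiv ℝ V (x + t • u) u - fderiv ℝ V x u - t * C with hF'
  have hFd : ∀ t, HasDerivAt F (F' t) t := by
    intro t
    have : HasDerivAt (fun t : ℝ => V x + t * fderiv ℝ V x u + t ^ 2 * (C / 2))
        (fderiv ℝ V x u + 2 * t * (C / 2)) t := by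
      have h1 := (hasDerivAt_id t).mul_const (fderiv ℝ V x u)
      have h2 := (hasDerivAt_pow 2 t).mul_const (C / 2)
      simpa using (h1.const_add (V x)).fun_add h2
    have := (phi_hasDerivAt hV x u t).fun_sub this
    refine this.congr_deriv ?_
    simp only [F']; ring
  have hF'd : ∀ t, HasDerivAt F' (fderiv ℝ (fderiv ℝ V) (x + t • u) u u - C) t := by
    intro t
    simpa using ((psi_hasDerivAt hV x u t).sub_const (fderiv ℝ V x u)).fun_sub
      ((hasDerivAt_id t).mul_const C)
  have hF'anti : Antitone F' := by
    apply antitone_of_deriv_nonpos (fun t => (hF'd t).differentiableAt)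
    intro t
    rw [(hF'd t).deriv]
    simpa using hq (x + t • u)
  have hF'0 : F' 0 = 0 := by simp [F']
  have hFanti : AntitoneOn F (Ici 0) := by
    apply antitoneOn_of_deriv_nonpos (convex_Ici 0)
    · exact fun t _ => (hFd t).differentiableAt.continuousAt.continuousWithinAt
    · exact fun t _ => (hFd t).differentiableAt.differentiableWithinAt
    · intro t ht
      rw [interior_Ici] at ht
      rw [(hFd t).deriv, ← hF'0]
      exact hF'anti (le_of_lt ht)
  have := hFanti (self_mem_Ici) (by norm_num : (1:ℝ) ∈ Ici 0) zero_le_one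
  simp only [F, one_smul, one_pow, one_mul, zero_smul, add_zero, zero_mul, zero_pow, pow_two,
    mul_zero] at this
  nlinarith [this]

lemma taylor_lower_general {V : EuclideanSpace ℝ (Fin d) → ℝ} (hV : ContDiff ℝ 2 V) (x u : E)
    {c : ℝ} (hq : ∀ y, c ≤ fderiv ℝ (fderiv ℝ V) y u u) :
    V x + fderiv ℝ V x u + c / 2 ≤ V (x + u) := by
  set F : ℝ → ℝ := fun t => (V x + t * fderiv ℝ V x u + t ^ 2 * (c / 2)) - V (x + t • u) with hF
  set F' : ℝ → ℝ := fun t => fderiv ℝ V x u + t * c - fderiv ℝ V (x + t • u) u with hF'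
  have hFd : ∀ t, HasDerivAt F (F' t) t := by
    intro t
    have h0 : HasDerivAt (fun t : ℝ => V x + t * fderiv ℝ V x u + t ^ 2 * (c / 2))
        (fderiv ℝ V x u + 2 * t * (c / 2)) t := by
      have h1 := (hasDerivAt_id t).mul_const (fderiv ℝ V x u)
      have h2 := (hasDerivAt_pow 2 t).mul_const (c / 2)
      simpa using (h1.const_add (V x)).fun_add h2
    have := h0.fun_sub (phi_hasDerivAt hV x u t)
    refine this.congr_deriv ?_
    simp only [F']; ring
  have hF'd : ∀ t, HasDerivAt F' (c - fderiv ℝ (fderiv ℝ V) (x + t • u) u u) t := by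
    intro t
    simpa using (((hasDerivAt_id t).mul_const c).const_add (fderiv ℝ V x u)).fun_sub
      (psi_hasDerivAt hV x u t)
  have hF'anti : Antitone F' := by
    apply antitone_of_deriv_nonpos (fun t => (hF'd t).differentiableAt)
    intro t
    rw [(hF'd t).deriv]
    simpa using hq (x + t • u)
  have hF'0 : F' 0 = 0 := by simp [F']
  have hFanti : AntitoneOn F (Ici 0) := by
    apply antitoneOn_of_deriv_nonpos (convex_Ici 0)
    · exact fun t _ => (hFd t).differentiableAt.continuousAt.continuousWithinAt
    · exact fun t _ => (hFd t).differentiableAt.differentiableWithinAt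
    · intro t ht
      rw [interior_Ici] at ht
      rw [(hFd t).deriv, ← hF'0]
      exact hF'anti (le_of_lt ht)
  have := hFanti (self_mem_Ici) (by norm_num : (1:ℝ) ∈ Ici 0) zero_le_one
  simp only [F, one_smul, one_pow, one_mul, zero_smul, add_zero, zero_mul, zero_pow, pow_two,
    mul_zero] at this
  nlinarith [this]

lemma fderiv_eq_inner_gradient (V : EuclideanSpace ℝ (Fin d) → ℝ) (x v : E) :
    fderiv ℝ V x v = ⟪gradient V x, v⟫_ℝ := by
  rw [gradient, toDual_symm_apply]

lemma norm_gradient_eq (V : EuclideanSpace ℝ (Fin d) → ℝ) (x : E) :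
    ‖gradient V x‖ = ‖fderiv ℝ V x‖ := by
  rw [gradient, LinearIsometryEquiv.norm_map]

lemma grad_sq_le {V : EuclideanSpace ℝ (Fin d) → ℝ} (hV : ContDiff ℝ 2 V)
    (hVpos : ∀ x, 0 < V x) {L : ℝ} (hL : 0 < L)
    (hquad : ∀ y u, fderiv ℝ (fderiv ℝ V) y u u ≤ L * ‖u‖ ^ 2) (x : E) :
    ‖gradient V x‖ ^ 2 ≤ 2 * L * V x := by
  set g := gradient V x with hg
  set u : E := (-L⁻¹) • g with hu
  have hnu : ‖u‖ ^ 2 = L⁻¹ ^ 2 * ‖g‖ ^ 2 := by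
    rw [hu, norm_smul]
    simp [abs_of_pos (inv_pos.2 hL), mul_pow]
  have hfu : fderiv ℝ V x u = -L⁻¹ * ‖g‖ ^ 2 := by
    rw [fderiv_eq_inner_gradient, ← hg, hu, real_inner_smul_right,
      real_inner_self_eq_norm_sq]
  have ht := taylor_upper_general hV x u (fun y => hquad y u)
  have hpos := hVpos (x + u)
  rw [hfu, hnu] at ht
  have hL'' : L * (L⁻¹ ^ 2 * ‖g‖ ^ 2) = L⁻¹ * ‖g‖ ^ 2 := by field_simp
  have key : L⁻¹ * ‖g‖ ^ 2 ≤ 2 * V x := by nlinarith [ht, hpos, hL'']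
  have : ‖g‖ ^ 2 = L * (L⁻¹ * ‖g‖ ^ 2) := by field_simp
  rw [this]
  calc L * (L⁻¹ * ‖g‖ ^ 2) ≤ L * (2 * V x) := mul_le_mul_of_nonneg_left key hL.le
    _ = 2 * L * V x := by ring

lemma lower_growth {V : EuclideanSpace ℝ (Fin d) → ℝ} (hV : ContDiff ℝ 2 V)
    (hVpos : ∀ x, 0 < V x) {α : ℝ} (hα : 0 < α)
    (hquad : ∀ y u, α * ‖u‖ ^ 2 ≤ fderiv ℝ (fderiv ℝ V) y u u) :
    ∃ c > 0, ∀ x, c * (1 + ‖x‖) ^ 2 ≤ V x := by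
  set g0 := ‖fderiv ℝ V (0 : E)‖ with hg0
  have hquadgrowth : ∀ x : E, V 0 - g0 * ‖x‖ + α / 2 * ‖x‖ ^ 2 ≤ V x := by
    intro x
    have ht := taylor_lower_general hV 0 x (fun y => hquad y x)
    simp only [zero_add] at ht
    have h1 : |fderiv ℝ V 0 x| ≤ g0 * ‖x‖ := by
      simpa [Real.norm_eq_abs] using (fderiv ℝ V (0 : E)).le_opNorm x
    have h2 := neg_abs_le (fderiv ℝ V (0 : E) x)
    nlinarith [ht]
  set R : ℝ := max 1 (4 * g0 / α) with hR
  have hR1 : (1 : ℝ) ≤ R := le_max_left _ _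
  obtain ⟨z, hz, hzmin⟩ := (isCompact_closedBall (0 : E) R).exists_isMinOn
    ⟨0, by simp [le_trans zero_le_one hR1]⟩ (hV.continuous.continuousOn)
  have hzpos : 0 < V z := hVpos z
  refine ⟨min (α / 16) (V z / (1 + R) ^ 2), by positivity, fun x => ?_⟩
  rcases le_or_gt ‖x‖ R with hx | hx
  · have hb : V z ≤ V x := hzmin (by simpa [Metric.mem_closedBall, dist_eq_norm] using hx : x ∈ Metric.closedBall 0 R)
    have h3 : (1 + ‖x‖) ^ 2 ≤ (1 + R) ^ 2 := by nlinarith [norm_nonneg x]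
    have h4 : min (α / 16) (V z / (1 + R) ^ 2) ≤ V z / (1 + R) ^ 2 := min_le_right _ _
    have h5 : (0:ℝ) < (1 + R) ^ 2 := by positivity
    calc min (α / 16) (V z / (1 + R) ^ 2) * (1 + ‖x‖) ^ 2
        ≤ V z / (1 + R) ^ 2 * (1 + R) ^ 2 := by
          apply mul_le_mul h4 h3 (by positivity) (by positivity)
      _ = V z := by field_simp
      _ ≤ V x := hb
  · have hxR : 4 * g0 / α ≤ ‖x‖ := le_trans (le_max_right _ _) hx.le
    have hx1 : 1 ≤ ‖x‖ := le_trans hR1 hx.le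
    have hg0' : 4 * g0 ≤ ‖x‖ * α := (div_le_iff₀ hα).1 hxR
    have h6 := hquadgrowth x
    have h7 : min (α / 16) (V z / (1 + R) ^ 2) ≤ α / 16 := min_le_left _ _
    have h8 : (0:ℝ) < (1 + ‖x‖) ^ 2 := by positivity
    have hV0 := hVpos 0
    calc min (α / 16) (V z / (1 + R) ^ 2) * (1 + ‖x‖) ^ 2
        ≤ α / 16 * (1 + ‖x‖) ^ 2 := mul_le_mul_of_nonneg_right h7 (by positivity)
      _ ≤ V x := by
          have h9 : g0 * ‖x‖ ≤ α / 4 * ‖x‖ ^ 2 := by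
            nlinarith [mul_le_mul_of_nonneg_right hg0' (norm_nonneg x)]
          have h10 : (1 + ‖x‖) ^ 2 ≤ 4 * ‖x‖ ^ 2 := by nlinarith [hx1]
          have h11 := mul_le_mul_of_nonneg_left h10 (by positivity : (0:ℝ) ≤ α / 16)
          nlinarith [h6, hV0]

/-- For `β > d/2 + 1` and `V` positive, `α`-strongly convex and `L`-gradient
Lipschitz: `∫ |∇V|² V^{-β} = (β−1)⁻¹ ∫ ΔV · V^{−(β−1)}`, and consequently
`∫ |∇V|² dπ_β ≤ (dL/(β−1)) ∫ V dπ_β`. -/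
theorem gradient_moment_identity_and_bound
    (d : ℕ) (hd : 1 ≤ d) (β : ℝ) (hβ : (d : ℝ) / 2 + 1 < β)
    (V : EuclideanSpace ℝ (Fin d) → ℝ)
    (hV : ContDiff ℝ 2 V) (hVpos : ∀ x, 0 < V x)
    (α L : ℝ) (hα : 0 < α) (hL : 0 < L)
    (hstrong : ∀ x, (hessianMatrix V x - α • 1).PosSemidef)
    (hlip : ∀ x, ((L • 1 : Matrix (Fin d) (Fin d) ℝ) - hessianMatrix V x).PosSemidef)
    (Zβ : ℝ) (hZβ : Zβ = ∫ x, V x ^ (-β))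
    (πβ : EuclideanSpace ℝ (Fin d) → ℝ)
    (hπβ : ∀ x, πβ x = Zβ⁻¹ * V x ^ (-β)) :
    (∫ x, ‖gradient V x‖ ^ 2 * V x ^ (-β))
        = (β - 1)⁻¹ * ∫ x, (hessianMatrix V x).trace * V x ^ (-(β - 1)) ∧
    (∫ x, ‖gradient V x‖ ^ 2 * πβ x)
        ≤ ((d : ℝ) * L / (β - 1)) * ∫ x, V x * πβ x := by
  classical
  have hd1 : (1 : ℝ) ≤ d := by exact_mod_cast hd
  have hβ32 : (3 : ℝ) / 2 < β := by linarith
  have hβ1 : (1 : ℝ) < β := by linarith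
  have hdβ : (d : ℝ) < 2 * β := by linarith
  have hdβ1 : (d : ℝ) < 2 * (β - 1) := by linarith
  have hVd : Differentiable ℝ V := hV.differentiable two_ne_zero
  have hWcd : ContDiff ℝ 1 (fderiv ℝ V) := hV.fderiv_right (le_refl 2)
  have hWd : Differentiable ℝ (fderiv ℝ V) := hWcd.differentiable one_ne_zero
  have hWc : Continuous (fderiv ℝ V) := hWcd.continuous
  have hBc : Continuous (fderiv ℝ (fderiv ℝ V)) := hWcd.continuous_fderiv one_ne_zero
  have hqU : ∀ y u, fderiv ℝ (fderiv ℝ V) y u u ≤ L * ‖u‖ ^ 2 :=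
    fun y u => quad_upper y (hlip y) u
  have hqL : ∀ y u, α * ‖u‖ ^ 2 ≤ fderiv ℝ (fderiv ℝ V) y u u :=
    fun y u => quad_lower y (hstrong y) u
  obtain ⟨c, hc, hlow⟩ := lower_growth hV hVpos hα hqL
  have hgrad2 : ∀ x, ‖gradient V x‖ ^ 2 ≤ 2 * L * V x := grad_sq_le hV hVpos hL hqU
  have hVc : Continuous V := hV.continuous
  have hVrc : ∀ p : ℝ, Continuous (fun x => V x ^ p) :=
    fun p => hVc.rpow_const (fun x => Or.inl (hVpos x).ne')
  have hgradc : Continuous (fun x => gradient V x) := by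
    have : (fun x => gradient V x)
        = fun x => (InnerProductSpace.toDual ℝ (EuclideanSpace ℝ (Fin d))).symm
            (fderiv ℝ V x) := rfl
    rw [this]
    exact (LinearIsometryEquiv.continuous _).comp hWc
  -- integrability of V powers
  have intV : ∀ γ : ℝ, (d : ℝ) < 2 * γ →
      Integrable (fun x : EuclideanSpace ℝ (Fin d) => V x ^ (-γ)) := by
    intro γ hγ
    have hd0 : (0 : ℝ) ≤ d := Nat.cast_nonneg d
    have hγ0 : 0 < γ := by linarith
    have hint := (integrable_one_add_norm (μ := (volume : Measure (EuclideanSpace ℝ (Fin d))))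
      (r := 2 * γ) (by rw [finrank_euclideanSpace_fin]; exact hγ)).const_mul (c ^ (-γ))
    apply hint.mono' ((hVrc (-γ)).aestronglyMeasurable)
    filter_upwards with x
    rw [Real.norm_eq_abs, abs_of_nonneg (Real.rpow_nonneg (hVpos x).le _)]
    have h1 : (0 : ℝ) < c * (1 + ‖x‖) ^ 2 := by positivity
    calc V x ^ (-γ) ≤ (c * (1 + ‖x‖) ^ 2) ^ (-γ) :=
          Real.rpow_le_rpow_of_nonpos h1 (hlow x) (by linarith)
      _ = c ^ (-γ) * (1 + ‖x‖) ^ (-(2 * γ)) := by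
          rw [Real.mul_rpow hc.le (by positivity)]
          congr 1
          rw [← Real.rpow_natCast (1 + ‖x‖) 2, ← Real.rpow_mul (by positivity)]
          congr 1
          push_cast
          ring
  have hVmul : ∀ x, V x * V x ^ (-β) = V x ^ (-(β - 1)) := by
    intro x
    rw [show -(β - 1) = 1 + -β by ring, Real.rpow_add (hVpos x), Real.rpow_one]
  -- integrability of the gradient term
  have intgrad : Integrable (fun x => ‖gradient V x‖ ^ 2 * V x ^ (-β)) := by
    apply ((intV (β - 1) hdβ1).const_mul (2 * L)).mono'
    · exact ((hgradc.norm.pow 2).mul (hVrc (-β))).aestronglyMeasurable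
    · filter_upwards with x
      have h0 : (0 : ℝ) ≤ V x ^ (-β) := Real.rpow_nonneg (hVpos x).le _
      rw [Real.norm_eq_abs, abs_of_nonneg (by positivity)]
      calc ‖gradient V x‖ ^ 2 * V x ^ (-β) ≤ (2 * L * V x) * V x ^ (-β) :=
            mul_le_mul_of_nonneg_right (hgrad2 x) h0
        _ = 2 * L * (V x * V x ^ (-β)) := by ring
        _ = 2 * L * V x ^ (-(β - 1)) := by rw [hVmul x]
  -- trace facts
  have htrace_eq : ∀ x, (hessianMatrix V x).trace
      = ∑ i, fderiv ℝ (fderiv ℝ V) x (ee i) (ee i) := by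
    intro x
    rw [Matrix.trace]
    exact Finset.sum_congr rfl fun i _ => by rw [Matrix.diag_apply, hessian_apply]
  have hee1 : ∀ i : Fin d, ‖ee i‖ = 1 := by
    intro i
    rw [ee, EuclideanSpace.norm_single]
    norm_num
  have hdiagU : ∀ x i, fderiv ℝ (fderiv ℝ V) x (ee i) (ee i) ≤ L := by
    intro x i
    have := hqU x (ee i)
    rwa [hee1 i, one_pow, mul_one] at this
  have hdiagL : ∀ x i, α ≤ fderiv ℝ (fderiv ℝ V) x (ee i) (ee i) := by
    intro x i
    have := hqL x (ee i)
    rwa [hee1 i, one_pow, mul_one] at this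
  have htraceU : ∀ x, (hessianMatrix V x).trace ≤ d * L := by
    intro x
    rw [htrace_eq x]
    calc ∑ i, fderiv ℝ (fderiv ℝ V) x (ee i) (ee i) ≤ ∑ _i : Fin d, L :=
          Finset.sum_le_sum fun i _ => hdiagU x i
      _ = d * L := by simp [mul_comm]
  have htraceL : ∀ x, 0 ≤ (hessianMatrix V x).trace := by
    intro x
    rw [htrace_eq x]
    exact Finset.sum_nonneg fun i _ => le_trans hα.le (hdiagL x i)
  have htrc : Continuous (fun x => (hessianMatrix V x).trace) := by
    have : (fun x => (hessianMatrix V x).trace)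
        = fun x => ∑ i, fderiv ℝ (fderiv ℝ V) x (ee i) (ee i) := funext htrace_eq
    rw [this]
    exact continuous_finset_sum _ fun i _ =>
      (hBc.clm_apply continuous_const).clm_apply continuous_const
  have inttrace : Integrable (fun x => (hessianMatrix V x).trace * V x ^ (-(β - 1))) := by
    apply ((intV (β - 1) hdβ1).const_mul ((d : ℝ) * L)).mono'
    · exact (htrc.mul (hVrc (-(β - 1)))).aestronglyMeasurable
    · filter_upwards with x
      have h0 : (0 : ℝ) ≤ V x ^ (-(β - 1)) := Real.rpow_nonneg (hVpos x).le _
      rw [Real.norm_eq_abs, abs_mul, abs_of_nonneg h0,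
        abs_of_nonneg (htraceL x)]
      exact mul_le_mul_of_nonneg_right (htraceU x) h0
  -- coordinates of the gradient
  have hcoord : ∀ x i, fderiv ℝ V x (ee i) = gradient V x i := by
    intro x i
    rw [fderiv_eq_inner_gradient, ee, EuclideanSpace.inner_single_right]
    simp
  have hcoordsq : ∀ x, ∑ i, (fderiv ℝ V x (ee i)) ^ 2 = ‖gradient V x‖ ^ 2 := by
    intro x
    rw [norm_sq_eq']
    exact Finset.sum_congr rfl fun i _ => by rw [hcoord]
  -- integrand of the divergence
  set Φ : Fin d → EuclideanSpace ℝ (Fin d) → ℝ := fun i x =>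
    fderiv ℝ (fderiv ℝ V) x (ee i) (ee i) * V x ^ (-(β - 1))
      - (β - 1) * (fderiv ℝ V x (ee i)) ^ 2 * V x ^ (-β) with hΦ
  have intΦ : ∀ i, Integrable (Φ i) := by
    intro i
    apply ((intV (β - 1) hdβ1).const_mul (L + (β - 1) * (2 * L))).mono'
    · apply Continuous.aestronglyMeasurable
      apply Continuous.sub
      · exact ((hBc.clm_apply continuous_const).clm_apply continuous_const).mul (hVrc (-(β - 1)))
      · exact (continuous_const.mul ((hWc.clm_apply continuous_const).pow 2)).mul (hVrc (-β))
    · filter_upwards with x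
      have h0 : (0 : ℝ) ≤ V x ^ (-(β - 1)) := Real.rpow_nonneg (hVpos x).le _
      have h0' : (0 : ℝ) ≤ V x ^ (-β) := Real.rpow_nonneg (hVpos x).le _
      have hB1 : |fderiv ℝ (fderiv ℝ V) x (ee i) (ee i)| ≤ L := by
        rw [abs_of_nonneg (le_trans hα.le (hdiagL x i))]
        exact hdiagU x i
      have hWsq : (fderiv ℝ V x (ee i)) ^ 2 ≤ 2 * L * V x := by
        have h1 : |fderiv ℝ V x (ee i)| ≤ ‖fderiv ℝ V x‖ := by
          have := (fderiv ℝ V x).le_opNorm (ee i)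
          rwa [hee1 i, mul_one, Real.norm_eq_abs] at this
        have h2 : (fderiv ℝ V x (ee i)) ^ 2 ≤ ‖fderiv ℝ V x‖ ^ 2 := by
          rw [← sq_abs]
          exact pow_le_pow_left₀ (abs_nonneg _) h1 2
        calc (fderiv ℝ V x (ee i)) ^ 2 ≤ ‖fderiv ℝ V x‖ ^ 2 := h2
          _ = ‖gradient V x‖ ^ 2 := by rw [norm_gradient_eq]
          _ ≤ 2 * L * V x := hgrad2 x
      calc ‖Φ i x‖ ≤ |fderiv ℝ (fderiv ℝ V) x (ee i) (ee i) * V x ^ (-(β - 1))|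
            + |(β - 1) * (fderiv ℝ V x (ee i)) ^ 2 * V x ^ (-β)| := abs_sub _ _
        _ ≤ L * V x ^ (-(β - 1)) + (β - 1) * (2 * L) * V x ^ (-(β - 1)) := by
            apply add_le_add
            · rw [abs_mul, abs_of_nonneg h0]
              exact mul_le_mul_of_nonneg_right hB1 h0
            · rw [abs_mul, abs_mul, abs_of_nonneg h0', abs_of_nonneg (sq_nonneg
                (fderiv ℝ V x (ee i))), abs_of_nonneg (by linarith : (0:ℝ) ≤ β - 1)]
              calc (β - 1) * (fderiv ℝ V x (ee i)) ^ 2 * V x ^ (-β)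
                  ≤ (β - 1) * (2 * L * V x) * V x ^ (-β) := by
                    apply mul_le_mul_of_nonneg_right _ h0'
                    exact mul_le_mul_of_nonneg_left hWsq (by linarith)
                _ = (β - 1) * (2 * L) * (V x * V x ^ (-β)) := by ring
                _ = (β - 1) * (2 * L) * V x ^ (-(β - 1)) := by rw [hVmul x]
        _ = (L + (β - 1) * (2 * L)) * V x ^ (-(β - 1)) := by ring
  -- the key integration by parts: each directional divergence integrates to zero
  have key : ∀ i, ∫ x, Φ i x = 0 := by
    intro i
    have heene : ee i ≠ (0 : EuclideanSpace ℝ (Fin d)) := by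
      intro h
      have h1 := hee1 i
      rw [h, norm_zero] at h1
      norm_num at h1
    set h : EuclideanSpace ℝ (Fin d) → ℝ := fun x => fderiv ℝ V x (ee i) * V x ^ (-(β - 1))
      with hh
    have hld : ∀ x, HasLineDerivAt ℝ h (Φ i x) x (ee i) := by
      intro x
      have h1 : HasFDerivAt (fun y => fderiv ℝ V y (ee i))
          ((ContinuousLinearMap.apply ℝ ℝ (ee i)).comp (fderiv ℝ (fderiv ℝ V) x)) x :=
        (ContinuousLinearMap.apply ℝ ℝ (ee i)).hasFDerivAt.comp x (hWd x).hasFDerivAt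
      have h2 : HasFDerivAt (fun y => V y ^ (-(β - 1)))
          ((-(β - 1) * V x ^ (-(β - 1) - 1)) • fderiv ℝ V x) x :=
        (Real.hasDerivAt_rpow_const (Or.inl (hVpos x).ne')).comp_hasFDerivAt x
          (hVd x).hasFDerivAt
      have h3 : HasLineDerivAt ℝ h _ x (ee i) := (h1.mul h2).hasLineDerivAt (ee i)
      convert h3 using 1
      simp only [ContinuousLinearMap.add_apply, ContinuousLinearMap.smul_apply,
        ContinuousLinearMap.comp_apply, ContinuousLinearMap.apply_apply, smul_eq_mul]
      rw [show -(β - 1) - 1 = -β by ring]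
      simp only [hΦ]
      ring
    apply divDir heene hld (intΦ i)
    -- decay at infinity
    have hb : ∀ x, ‖h x‖ ≤ (2 * L) ^ ((1:ℝ)/2) * (c * (1 + ‖x‖) ^ 2) ^ ((3:ℝ)/2 - β) := by
      intro x
      have hVp := hVpos x
      have h0 : (0 : ℝ) ≤ V x ^ (-(β - 1)) := Real.rpow_nonneg hVp.le _
      have h1pos : (0 : ℝ) < c * (1 + ‖x‖) ^ 2 := by positivity
      have hgn : |fderiv ℝ V x (ee i)| ≤ (2 * L) ^ ((1:ℝ)/2) * V x ^ ((1:ℝ)/2) := by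
        have h1 : |fderiv ℝ V x (ee i)| ≤ ‖gradient V x‖ := by
          have := (fderiv ℝ V x).le_opNorm (ee i)
          rw [hee1 i, mul_one, Real.norm_eq_abs] at this
          rwa [norm_gradient_eq]
        have h2 : ‖gradient V x‖ = (‖gradient V x‖ ^ 2) ^ ((1:ℝ)/2) := by
          rw [← Real.rpow_natCast ‖gradient V x‖ 2, ← Real.rpow_mul (norm_nonneg _)]
          norm_num
        have h3 : (‖gradient V x‖ ^ 2) ^ ((1:ℝ)/2) ≤ (2 * L * V x) ^ ((1:ℝ)/2) :=
          Real.rpow_le_rpow (sq_nonneg _) (hgrad2 x) (by norm_num)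
        have h4 : (2 * L * V x) ^ ((1:ℝ)/2) = (2 * L) ^ ((1:ℝ)/2) * V x ^ ((1:ℝ)/2) :=
          Real.mul_rpow (by positivity) hVp.le
        calc |fderiv ℝ V x (ee i)| ≤ ‖gradient V x‖ := h1
          _ = (‖gradient V x‖ ^ 2) ^ ((1:ℝ)/2) := h2
          _ ≤ (2 * L * V x) ^ ((1:ℝ)/2) := h3
          _ = (2 * L) ^ ((1:ℝ)/2) * V x ^ ((1:ℝ)/2) := h4
      have hVhalf : V x ^ ((1:ℝ)/2) * V x ^ (-(β - 1)) = V x ^ ((3:ℝ)/2 - β) := by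
        rw [← Real.rpow_add hVp]
        congr 1
        ring
      calc ‖h x‖ = |fderiv ℝ V x (ee i)| * V x ^ (-(β - 1)) := by
            rw [hh, Real.norm_eq_abs, abs_mul, abs_of_nonneg h0]
        _ ≤ ((2 * L) ^ ((1:ℝ)/2) * V x ^ ((1:ℝ)/2)) * V x ^ (-(β - 1)) :=
            mul_le_mul_of_nonneg_right hgn h0
        _ = (2 * L) ^ ((1:ℝ)/2) * V x ^ ((3:ℝ)/2 - β) := by
            rw [mul_assoc, hVhalf]
        _ ≤ (2 * L) ^ ((1:ℝ)/2) * (c * (1 + ‖x‖) ^ 2) ^ ((3:ℝ)/2 - β) := by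
            apply mul_le_mul_of_nonneg_left _ (Real.rpow_nonneg (by positivity) _)
            exact Real.rpow_le_rpow_of_nonpos h1pos (hlow x) (by linarith)
    have t0 : Tendsto (fun r : ℝ => c * (1 + r) ^ 2) atTop atTop := by
      apply Tendsto.const_mul_atTop hc
      exact (tendsto_pow_atTop two_ne_zero).comp (tendsto_atTop_add_const_left atTop 1 tendsto_id)
    have t1 : Tendsto (fun x : EuclideanSpace ℝ (Fin d) => c * (1 + ‖x‖) ^ 2)
        (cocompact (EuclideanSpace ℝ (Fin d))) atTop := t0.comp tendsto_norm_cocompact_atTop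
    have t2 : Tendsto (fun y : ℝ => y ^ ((3:ℝ)/2 - β)) atTop (𝓝 0) := by
      rw [show (3:ℝ)/2 - β = -(β - 3/2) by ring]
      exact tendsto_rpow_neg_atTop (by linarith)
    have t3 := (t2.comp t1).const_mul ((2 * L) ^ ((1:ℝ)/2))
    rw [mul_zero] at t3
    exact squeeze_zero_norm hb t3
  -- summing over directions
  have sumzero : ∫ x, ∑ i, Φ i x = 0 := by
    rw [integral_finset_sum Finset.univ (fun i _ => intΦ i)]
    simp [key]
  have pointsum : ∀ x, ∑ i, Φ i x = (hessianMatrix V x).trace * V x ^ (-(β - 1))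
      - (β - 1) * (‖gradient V x‖ ^ 2 * V x ^ (-β)) := by
    intro x
    rw [hΦ]
    rw [Finset.sum_sub_distrib, ← Finset.sum_mul, ← htrace_eq]
    congr 1
    rw [← Finset.sum_mul, ← Finset.mul_sum, hcoordsq x]
    ring
  -- the identity
  have intgrad' : Integrable (fun x => (β - 1) * (‖gradient V x‖ ^ 2 * V x ^ (-β))) :=
    intgrad.const_mul _
  have ID0 : (∫ x, (hessianMatrix V x).trace * V x ^ (-(β - 1)))
      - ∫ x, (β - 1) * (‖gradient V x‖ ^ 2 * V x ^ (-β)) = 0 := by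
    rw [← integral_sub inttrace intgrad']
    rw [← sumzero]
    exact integral_congr_ae (Filter.Eventually.of_forall fun x => (pointsum x).symm)
  have hβ1' : β - 1 ≠ 0 := by linarith
  have ID1 : (∫ x, ‖gradient V x‖ ^ 2 * V x ^ (-β))
      = (β - 1)⁻¹ * ∫ x, (hessianMatrix V x).trace * V x ^ (-(β - 1)) := by
    rw [integral_const_mul] at ID0
    have h := ID0
    have : ∫ x, (hessianMatrix V x).trace * V x ^ (-(β - 1))
        = (β - 1) * ∫ x, ‖gradient V x‖ ^ 2 * V x ^ (-β) := by linarith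
    rw [this, inv_mul_cancel_left₀ hβ1']
  refine ⟨ID1, ?_⟩
  -- the bound
  have hZnn : 0 ≤ Zβ⁻¹ := by
    rw [hZβ]
    exact inv_nonneg.2 (integral_nonneg fun x => Real.rpow_nonneg (hVpos x).le _)
  have e1 : ∀ x, ‖gradient V x‖ ^ 2 * πβ x
      = Zβ⁻¹ * (‖gradient V x‖ ^ 2 * V x ^ (-β)) := by
    intro x
    rw [hπβ x]
    ring
  have e2 : ∀ x, V x * πβ x = Zβ⁻¹ * V x ^ (-(β - 1)) := by
    intro x
    rw [hπβ x, ← hVmul x]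
    ring
  rw [integral_congr_ae (Filter.Eventually.of_forall e1),
    integral_congr_ae (Filter.Eventually.of_forall e2),
    integral_const_mul, integral_const_mul]
  have hIb : (∫ x, (hessianMatrix V x).trace * V x ^ (-(β - 1)))
      ≤ (d : ℝ) * L * ∫ x, V x ^ (-(β - 1)) := by
    rw [← integral_const_mul]
    apply integral_mono inttrace ((intV (β - 1) hdβ1).const_mul _)
    intro x
    exact mul_le_mul_of_nonneg_right (htraceU x) (Real.rpow_nonneg (hVpos x).le _)
  calc Zβ⁻¹ * ∫ x, ‖gradient V x‖ ^ 2 * V x ^ (-β)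
      = Zβ⁻¹ * ((β - 1)⁻¹ * ∫ x, (hessianMatrix V x).trace * V x ^ (-(β - 1))) := by
        rw [ID1]
    _ ≤ Zβ⁻¹ * ((β - 1)⁻¹ * ((d : ℝ) * L * ∫ x, V x ^ (-(β - 1)))) := by
        apply mul_le_mul_of_nonneg_left _ hZnn
        exact mul_le_mul_of_nonneg_left hIb (inv_nonneg.2 (by linarith))
    _ = (d : ℝ) * L / (β - 1) * (Zβ⁻¹ * ∫ x, V x ^ (-(β - 1))) := by
        rw [div_eq_mul_inv]
        ring
end
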